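/- Let f : [0,∞) → ℝ be Lipschitz continuous with constant L ≥ 0, let m ∈ ℕ, let (λ_k)_{k>m} be reals with λ_k ≥ λ_{m+1} > 0, and let (c_k)_{k>m} be reals with Σ_{k>m} |c_k|/λ_k < ∞. Then the function t ↦ Σ_{k>m} c_k e^{−λ_k t} f(t) is integrable on (0,∞) and |∫₀^∞ ( Σ_{k>m} c_k e^{−λ_k t} ) f(t) dt − ( Σ_{k>m} c_k/λ_k ) f(0)| ≤ L Σ_{k>m} |c_k|/λ_k². -/

import Mathlib

open MeasureTheory

section auxmem

lemma aux_mul_exp_le (x : ℝ) : x * Real.exp (-x) ≤ (Real.exp 1)⁻¹ := by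
  have h := Real.add_one_le_exp (x - 1)
  have h2 : x ≤ Real.exp (x - 1) := by linarith
  calc x * Real.exp (-x) ≤ Real.exp (x - 1) * Real.exp (-x) :=
        mul_le_mul_of_nonneg_right h2 (Real.exp_nonneg _)
    _ = Real.exp (-1) := by rw [← Real.exp_add]; ring_nf
    _ = (Real.exp 1)⁻¹ := by rw [Real.exp_neg]

lemma aux_texp_int {l : ℝ} (hl : 0 < l) :
    IntegrableOn (fun t : ℝ => t * Real.exp (-l * t)) (Set.Ioi 0) := by
  have hint : IntegrableOn (fun t : ℝ => (2 / (Real.exp 1 * l)) * Real.exp (-(l/2) * t))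
      (Set.Ioi 0) := (exp_neg_integrableOn_Ioi 0 (half_pos hl)).const_mul _
  refine hint.mono' ?_ ?_
  · exact ((continuous_id.mul (by continuity)).aestronglyMeasurable)
  · filter_upwards [ae_restrict_mem measurableSet_Ioi] with t ht
    have ht0 : 0 < t := ht
    have key : (l/2 * t) * Real.exp (-(l/2 * t)) ≤ (Real.exp 1)⁻¹ := aux_mul_exp_le _
    have h1 : t * Real.exp (-(l/2) * t) ≤ 2 / (Real.exp 1 * l) := by
      rw [le_div_iff₀ (by positivity), show -(l/2)*t = -(l/2*t) by ring]
      calc t * Real.exp (-(l/2*t)) * (Real.exp 1 * l)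
          = (2 * Real.exp 1) * ((l/2*t) * Real.exp (-(l/2*t))) := by ring
        _ ≤ (2 * Real.exp 1) * (Real.exp 1)⁻¹ :=
            mul_le_mul_of_nonneg_left key (by positivity)
        _ = 2 * (Real.exp 1 * (Real.exp 1)⁻¹) := by ring
        _ = 2 := by rw [mul_inv_cancel₀ (Real.exp_ne_zero _), mul_one]
    have h2 : Real.exp (-l * t) = Real.exp (-(l/2) * t) * Real.exp (-(l/2) * t) := by
      rw [← Real.exp_add]; ring_nf
    rw [Real.norm_eq_abs, abs_of_nonneg (by positivity)]
    calc t * Real.exp (-l * t) = (t * Real.exp (-(l/2) * t)) * Real.exp (-(l/2) * t) := by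
          rw [h2]; ring
      _ ≤ (2 / (Real.exp 1 * l)) * Real.exp (-(l/2) * t) :=
          mul_le_mul_of_nonneg_right h1 (Real.exp_nonneg _)

lemma aux_exp_val {l : ℝ} (hl : 0 < l) :
    ∫ t in Set.Ioi (0:ℝ), Real.exp (-l * t) = 1 / l := by
  have h := Real.integral_rpow_mul_exp_neg_mul_Ioi (a := 1) (r := l) one_pos hl
  simp only [sub_self, Real.rpow_zero, one_mul, Real.Gamma_one, Real.rpow_one, mul_one] at h
  rw [← h]
  refine setIntegral_congr_fun measurableSet_Ioi (fun t ht => ?_)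
  rw [neg_mul]

lemma aux_texp_val {l : ℝ} (hl : 0 < l) :
    ∫ t in Set.Ioi (0:ℝ), t * Real.exp (-l * t) = 1 / l ^ 2 := by
  have h := Real.integral_rpow_mul_exp_neg_mul_Ioi (a := 2) (r := l) two_pos hl
  have h2 : ((2:ℝ) - 1) = 1 := by norm_num
  rw [h2] at h
  simp only [Real.rpow_one, Real.Gamma_two, mul_one] at h
  rw [show ((1:ℝ)/l) ^ (2:ℝ) = 1 / l ^ 2 by
    rw [show (2:ℝ) = ((2:ℕ):ℝ) by norm_num, Real.rpow_natCast, div_pow, one_pow]] at h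
  rw [← h]
  refine setIntegral_congr_fun measurableSet_Ioi (fun t ht => ?_)
  rw [neg_mul]

lemma aux_exp_le {l t : ℝ} (hl : 0 < l) (ht : 0 < t) :
    Real.exp (-l * t) ≤ (Real.exp 1 * (l * t))⁻¹ := by
  have key := aux_mul_exp_le (l * t)
  rw [inv_eq_one_div, le_div_iff₀ (by positivity), neg_mul]
  calc Real.exp (-(l * t)) * (Real.exp 1 * (l*t))
      = ((l*t) * Real.exp (-(l*t))) * Real.exp 1 := by ring
    _ ≤ (Real.exp 1)⁻¹ * Real.exp 1 :=
        mul_le_mul_of_nonneg_right key (Real.exp_nonneg _)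
    _ = 1 := inv_mul_cancel₀ (Real.exp_ne_zero _)

end auxmem

/-- Error bound for approximating the tail of the memory kernel by a delta term:
|∫₀^∞ (Σ_{k>m} c_k e^{−λ_k t}) f(t) dt − (Σ_{k>m} c_k/λ_k) f(0)| ≤ L Σ_{k>m} |c_k|/λ_k². -/
theorem memory_kernel_tail_delta_error
    (f : ℝ → ℝ) (L : ℝ) (hL : 0 ≤ L)
    (hlip : ∀ s ∈ Set.Ici (0:ℝ), ∀ t ∈ Set.Ici (0:ℝ), |f s - f t| ≤ L * |s - t|)
    (m : ℕ) (c lam : ℕ → ℝ)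
    (hlam1 : 0 < lam (m + 1)) (hlam : ∀ k, m < k → lam (m + 1) ≤ lam k)
    (hsum : Summable fun k : {k : ℕ // m < k} => |c k.1| / lam k.1) :
    IntegrableOn
        (fun t => (∑' k : {k : ℕ // m < k}, c k.1 * Real.exp (-lam k.1 * t)) * f t)
        (Set.Ioi 0)
      ∧ |(∫ t in Set.Ioi (0:ℝ),
            (∑' k : {k : ℕ // m < k}, c k.1 * Real.exp (-lam k.1 * t)) * f t)
          - (∑' k : {k : ℕ // m < k}, c k.1 / lam k.1) * f 0|
        ≤ L * ∑' k : {k : ℕ // m < k}, |c k.1| / (lam k.1) ^ 2 := by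
  set μ := volume.restrict (Set.Ioi (0:ℝ)) with hμ
  have hlamk : ∀ k : {k : ℕ // m < k}, 0 < lam k.1 := fun k => hlam1.trans_le (hlam k.1 k.2)
  -- basic facts about f
  have hf0 : ∀ t : ℝ, 0 ≤ t → |f t| ≤ |f 0| + L * t := by
    intro t ht
    have h := hlip t (Set.mem_Ici.2 ht) 0 Set.self_mem_Ici
    rw [sub_zero, abs_of_nonneg ht] at h
    calc |f t| = |f t - f 0 + f 0| := by ring_nf
      _ ≤ |f t - f 0| + |f 0| := abs_add_le _ _
      _ ≤ L * t + |f 0| := by linarith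
      _ = |f 0| + L * t := by ring
  have hfm : AEStronglyMeasurable f μ := by
    have hcont : ContinuousOn f (Set.Ici (0:ℝ)) := by
      refine LipschitzOnWith.continuousOn (K := Real.toNNReal L) ?_
      refine LipschitzOnWith.of_dist_le_mul (fun x hx y hy => ?_)
      rw [Real.dist_eq, Real.dist_eq, Real.coe_toNNReal L hL]
      exact hlip x hx y hy
    exact (hcont.mono Set.Ioi_subset_Ici_self).aestronglyMeasurable measurableSet_Ioi
  set F : {k : ℕ // m < k} → ℝ → ℝ :=
    fun k t => c k.1 * Real.exp (-lam k.1 * t) * f t with hFdef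
  set B : {k : ℕ // m < k} → ℝ :=
    fun k => |c k.1| / lam k.1 * (|f 0| + L / lam (m+1)) with hBdef
  have hFmeas : ∀ k : {k : ℕ // m < k}, AEStronglyMeasurable (F k) μ := by
    intro k
    exact ((continuous_const.mul (by continuity : Continuous fun t : ℝ =>
      Real.exp (-lam k.1 * t))).aestronglyMeasurable).mul hfm
  have hbnd_int : ∀ k : {k : ℕ // m < k}, Integrable
      (fun t => |c k.1| * Real.exp (-lam k.1 * t) * (|f 0| + L * t)) μ := by
    intro k
    have h := (((exp_neg_integrableOn_Ioi 0 (hlamk k)).const_mul (|c k.1| * |f 0|)).add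
      ((aux_texp_int (hlamk k)).const_mul (|c k.1| * L)))
    refine h.congr (Filter.Eventually.of_forall fun t => ?_)
    simp only [Pi.add_apply]
    ring
  have hFle : ∀ k : {k : ℕ // m < k}, ∀ᵐ t ∂μ, ‖F k t‖ ≤ |c k.1| * Real.exp (-lam k.1 * t) * (|f 0| + L * t) := by
    intro k
    rw [hμ]
    filter_upwards [ae_restrict_mem measurableSet_Ioi] with t ht
    have ht0 : (0:ℝ) < t := ht
    rw [Real.norm_eq_abs, hFdef, abs_mul, abs_mul, abs_of_pos (Real.exp_pos _)]
    exact mul_le_mul_of_nonneg_left (hf0 t ht0.le) (by positivity)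
  have hFint : ∀ k : {k : ℕ // m < k}, Integrable (F k) μ := fun k => (hbnd_int k).mono' (hFmeas k) (hFle k)
  have hbnd_val : ∀ k : {k : ℕ // m < k}, ∫ t, |c k.1| * Real.exp (-lam k.1 * t) * (|f 0| + L * t) ∂μ
      = |c k.1| * |f 0| * (1 / lam k.1) + |c k.1| * L * (1 / lam k.1 ^ 2) := by
    intro k
    have heq : (fun t => |c k.1| * Real.exp (-lam k.1 * t) * (|f 0| + L * t))
        = fun t => (|c k.1| * |f 0|) * Real.exp (-lam k.1 * t)
          + (|c k.1| * L) * (t * Real.exp (-lam k.1 * t)) := funext fun t => by ring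
    rw [hμ] at *
    rw [heq, integral_add ((exp_neg_integrableOn_Ioi 0 (hlamk k)).const_mul _)
      ((aux_texp_int (hlamk k)).const_mul _), integral_const_mul, integral_const_mul,
      aux_exp_val (hlamk k), aux_texp_val (hlamk k)]
  have hB : ∀ k : {k : ℕ // m < k}, ∫ t, ‖F k t‖ ∂μ ≤ B k := by
    intro k
    have h1 : ∫ t, ‖F k t‖ ∂μ ≤ ∫ t, |c k.1| * Real.exp (-lam k.1 * t) * (|f 0| + L * t) ∂μ :=
      integral_mono_ae (hFint k).norm (hbnd_int k) (hFle k)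
    rw [hbnd_val k] at h1
    refine h1.trans ?_
    have hL1 : L / lam k.1 ≤ L / lam (m+1) :=
      div_le_div_of_nonneg_left hL hlam1 (hlam k.1 k.2)
    have he : |c k.1| * |f 0| * (1 / lam k.1) + |c k.1| * L * (1 / lam k.1 ^ 2)
        = |c k.1| / lam k.1 * (|f 0| + L / lam k.1) := by
      have hne := (hlamk k).ne'
      field_simp
    rw [he, hBdef]
    exact mul_le_mul_of_nonneg_left (by linarith)
      (div_nonneg (abs_nonneg _) (hlamk k).le)
  have hBsum : Summable B := hsum.mul_right _
  have hnorm_nonneg : ∀ k : {k : ℕ // m < k}, 0 ≤ ∫ t, ‖F k t‖ ∂μ :=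
    fun k => integral_nonneg fun t => norm_nonneg _
  have hnormsum : Summable fun k => ∫ t, ‖F k t‖ ∂μ :=
    Summable.of_nonneg_of_le hnorm_nonneg hB hBsum
  have hIntEq : ∑' k, ∫ t, F k t ∂μ = ∫ t, (∑' k, F k t) ∂μ :=
    integral_tsum_of_summable_integral_norm hFint hnormsum
  have hSummInt : Summable fun k => ∫ t, F k t ∂μ :=
    (hasSum_integral_of_summable_integral_norm hFint hnormsum).summable
  -- pointwise summability on Ioi 0
  have hpt : ∀ t : ℝ, 0 < t → Summable fun k => ‖F k t‖ := by
    intro t ht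
    refine Summable.of_nonneg_of_le (fun k => norm_nonneg _) (fun k => ?_)
      (hsum.mul_right ((Real.exp 1 * t)⁻¹ * |f t|))
    have hle := aux_exp_le (hlamk k) ht
    rw [Real.norm_eq_abs, hFdef, abs_mul, abs_mul, abs_of_pos (Real.exp_pos _)]
    calc |c k.1| * Real.exp (-lam k.1 * t) * |f t|
        ≤ |c k.1| * (Real.exp 1 * (lam k.1 * t))⁻¹ * |f t| := by
          refine mul_le_mul_of_nonneg_right ?_ (abs_nonneg _)
          exact mul_le_mul_of_nonneg_left hle (abs_nonneg _)
      _ = |c k.1| / lam k.1 * ((Real.exp 1 * t)⁻¹ * |f t|) := by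
          rw [div_eq_mul_inv]
          have h1 : (Real.exp 1 * (lam k.1 * t))⁻¹
              = (lam k.1)⁻¹ * (Real.exp 1 * t)⁻¹ := by
            rw [mul_inv, mul_inv]
            ring
          rw [h1]; ring
  have hmeas_tsum : AEStronglyMeasurable (fun t => ∑' k, F k t) μ := by
    refine aestronglyMeasurable_of_tendsto_ae (Filter.atTop : Filter (Finset {k : ℕ // m < k}))
      (fun s => s.aestronglyMeasurable_sum fun k _ => hFmeas k) ?_
    rw [hμ]
    filter_upwards [ae_restrict_mem measurableSet_Ioi] with t ht
    simp only [Finset.sum_apply]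
    exact (((hpt t ht).of_norm).hasSum)
  have hfin : HasFiniteIntegral (fun t => ∑' k, F k t) μ := by
    have hcalc : ∫⁻ t, ‖∑' k, F k t‖₊ ∂μ < ⊤ := by
      calc ∫⁻ t, ‖∑' k, F k t‖₊ ∂μ
          ≤ ∫⁻ t, ∑' k, (‖F k t‖₊ : ENNReal) ∂μ := by
            refine lintegral_mono_ae ?_
            rw [hμ]
            filter_upwards [ae_restrict_mem measurableSet_Ioi] with t ht
            have hsumt : Summable fun k => ‖F k t‖₊ := by
              rw [← NNReal.summable_coe]
              exact (hpt t ht).congr fun k => (coe_nnnorm _).symm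
            calc (‖∑' k, F k t‖₊ : ENNReal)
                ≤ ((∑' k, ‖F k t‖₊ : NNReal) : ENNReal) :=
                  ENNReal.coe_le_coe.2 (nnnorm_tsum_le hsumt)
              _ = ∑' k, (‖F k t‖₊ : ENNReal) := ENNReal.coe_tsum hsumt
        _ = ∑' k, ∫⁻ t, ‖F k t‖₊ ∂μ := lintegral_tsum fun k => (hFmeas k).enorm
        _ ≤ ∑' k, ENNReal.ofReal (B k) := by
            refine ENNReal.tsum_le_tsum fun k => ?_
            erw [← ofReal_integral_norm_eq_lintegral_enorm (hFint k)]
            exact ENNReal.ofReal_le_ofReal (hB k)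
        _ = ENNReal.ofReal (∑' k, B k) :=
            (ENNReal.ofReal_tsum_of_nonneg (fun k =>
              mul_nonneg (div_nonneg (abs_nonneg _) (hlamk k).le)
                (add_nonneg (abs_nonneg _) (div_nonneg hL hlam1.le))) hBsum).symm
        _ < ⊤ := ENNReal.ofReal_lt_top
    exact hcalc
  have hInt : Integrable (fun t => ∑' k, F k t) μ := ⟨hmeas_tsum, hfin⟩
  have hfunEq : (fun t => (∑' k : {k : ℕ // m < k}, c k.1 * Real.exp (-lam k.1 * t)) * f t)
      = fun t => ∑' k, F k t := funext fun t => tsum_mul_right.symm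
  constructor
  · show Integrable _ μ
    rw [hfunEq]
    exact hInt
  -- the bound
  · have hck : ∀ k : {k : ℕ // m < k}, ∫ t, c k.1 * Real.exp (-lam k.1 * t) * f 0 ∂μ
        = c k.1 / lam k.1 * f 0 := by
      intro k
      have heq : (fun t => c k.1 * Real.exp (-lam k.1 * t) * f 0)
          = fun t => (c k.1 * f 0) * Real.exp (-lam k.1 * t) := funext fun t => by ring
      rw [heq, integral_const_mul, hμ, aux_exp_val (hlamk k)]
      ring
    have hconst_int : ∀ k : {k : ℕ // m < k}, Integrable (fun t => c k.1 * Real.exp (-lam k.1 * t) * f 0) μ := by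
      intro k
      have h := (exp_neg_integrableOn_Ioi 0 (hlamk k)).const_mul (c k.1 * f 0)
      rw [← hμ] at h
      exact h.congr (Filter.Eventually.of_forall fun t => by ring)
    have hdk : ∀ k : {k : ℕ // m < k}, |(∫ t, F k t ∂μ) - c k.1 / lam k.1 * f 0|
        ≤ L * (|c k.1| / lam k.1 ^ 2) := by
      intro k
      have hd : (∫ t, F k t ∂μ) - c k.1 / lam k.1 * f 0
          = ∫ t, c k.1 * Real.exp (-lam k.1 * t) * (f t - f 0) ∂μ := by
        rw [← hck k, ← integral_sub (hFint k) (hconst_int k)]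
        exact integral_congr_ae (Filter.Eventually.of_forall fun t => by rw [hFdef]; ring)
      rw [hd]
      have hbound : ‖∫ t, c k.1 * Real.exp (-lam k.1 * t) * (f t - f 0) ∂μ‖
          ≤ ∫ t, (L * |c k.1|) * (t * Real.exp (-lam k.1 * t)) ∂μ := by
        refine norm_integral_le_of_norm_le ((aux_texp_int (hlamk k)).const_mul _) ?_
        rw [hμ]
        filter_upwards [ae_restrict_mem measurableSet_Ioi] with t ht
        have ht0 : (0:ℝ) < t := ht
        have hft : |f t - f 0| ≤ L * t := by
          have h := hlip t (Set.mem_Ici.2 ht0.le) 0 Set.self_mem_Ici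
          rwa [sub_zero, abs_of_nonneg ht0.le] at h
        rw [Real.norm_eq_abs, abs_mul, abs_mul, abs_of_pos (Real.exp_pos _)]
        calc |c k.1| * Real.exp (-lam k.1 * t) * |f t - f 0|
            ≤ |c k.1| * Real.exp (-lam k.1 * t) * (L * t) :=
              mul_le_mul_of_nonneg_left hft (by positivity)
          _ = (L * |c k.1|) * (t * Real.exp (-lam k.1 * t)) := by ring
      rw [Real.norm_eq_abs] at hbound
      refine hbound.trans ?_
      rw [integral_const_mul, hμ, aux_texp_val (hlamk k)]
      exact le_of_eq (by ring)
    have hsum_cl : Summable fun k : {k : ℕ // m < k} => c k.1 / lam k.1 * f 0 := by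
      have h1 : Summable fun k : {k : ℕ // m < k} => c k.1 / lam k.1 := by
        refine Summable.of_norm ?_
        exact hsum.congr fun k => by
          rw [Real.norm_eq_abs, abs_div, abs_of_pos (hlamk k)]
      exact h1.mul_right _
    have hsum_l2 : Summable fun k : {k : ℕ // m < k} => |c k.1| / lam k.1 ^ 2 := by
      refine Summable.of_nonneg_of_le (fun k => by positivity) (fun k => ?_)
        (hsum.mul_right (1 / lam (m+1)))
      have e1 : |c k.1| / lam k.1 * (1 / lam k.1) = |c k.1| / lam k.1 ^ 2 := by
        rw [div_mul_div_comm, mul_one, ← pow_two]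
      rw [← e1]
      exact mul_le_mul_of_nonneg_left
        (one_div_le_one_div_of_le hlam1 (hlam k.1 k.2))
        (div_nonneg (abs_nonneg _) (hlamk k).le)
    have htsum_cl : ∑' k : {k : ℕ // m < k}, c k.1 / lam k.1 * f 0
        = (∑' k : {k : ℕ // m < k}, c k.1 / lam k.1) * f 0 := tsum_mul_right
    rw [hfunEq, ← hIntEq, ← htsum_cl, ← Summable.tsum_sub hSummInt hsum_cl]
    have hfinal := tsum_of_norm_bounded ((hsum_l2.hasSum).mul_left L)
      (fun k => by rw [Real.norm_eq_abs]; exact hdk k)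
    rwa [Real.norm_eq_abs] at hfinal
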